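/- Strict monotonicity of the total mass in the remaining resource level: assume 0 < φ ≤ 1, 0 < μ ≤ ψ, ω > 0, and at least one of φ < 1 or μ < ψ, and fix R⁺ > 0. Then the function N(a) = (I₁(a, R⁺)/I₂(a, R⁺))·ln(R⁺/a) is strictly decreasing on (0, R⁺): for 0 < a₁ < a₂ < R⁺ one has N(a₁) > N(a₂). -/
import Mathlib


open Real Filter intervalIntegral

/-- Nondimensional stationary-to-moving switching rate. -/
noncomputable def ksm (φ R : ℝ) : ℝ := φ - (φ - 1) * Real.exp (-R)

/-- Nondimensional moving-to-stationary switching rate. -/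
noncomputable def kms (ψ μ ω R : ℝ) : ℝ := ψ - (ψ - μ) * Real.exp (-ω * R)

/-- I₁(a,b) = ∫_a^b k_sm(r)/r dr. -/
noncomputable def I1 (φ a b : ℝ) : ℝ := ∫ r in a..b, ksm φ r / r

/-- I₂(a,b) = ∫_a^b k_ms(r)/r dr. -/
noncomputable def I2 (ψ μ ω a b : ℝ) : ℝ := ∫ r in a..b, kms ψ μ ω r / r

lemma ksm_cont (φ : ℝ) : Continuous (ksm φ) := by
  unfold ksm; continuity

lemma kms_cont (ψ μ ω : ℝ) : Continuous (kms ψ μ ω) := by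
  unfold kms; continuity

lemma intOn {f : ℝ → ℝ} (hf : Continuous f) {a b : ℝ} (ha : 0 < a) (hab : a ≤ b) :
    IntervalIntegrable (fun r => f r / r) MeasureTheory.volume a b := by
  apply ContinuousOn.intervalIntegrable
  apply ContinuousOn.div hf.continuousOn continuousOn_id
  intro x hx
  rw [Set.uIcc_of_le hab] at hx
  exact ne_of_gt (lt_of_lt_of_le ha hx.1)

lemma const_int {a b c : ℝ} (ha : 0 < a) (hab : a ≤ b) :
    (∫ r in a..b, c / r) = c * Real.log (b / a) := by
  have h0 : (0:ℝ) ∉ Set.uIcc a b := by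
    rw [Set.uIcc_of_le hab]
    intro h
    exact absurd h.1 (not_le.2 ha)
  simp_rw [div_eq_mul_inv, intervalIntegral.integral_const_mul,
    integral_inv h0, div_eq_mul_inv]

lemma int_le {f : ℝ → ℝ} (hf : Continuous f) {a b c : ℝ} (ha : 0 < a) (hab : a ≤ b)
    (hc : ∀ x ∈ Set.Icc a b, f x ≤ c) :
    (∫ r in a..b, f r / r) ≤ c * Real.log (b / a) := by
  rw [← const_int ha hab]
  apply intervalIntegral.integral_mono_on hab (intOn hf ha hab)
    (intOn continuous_const ha hab)
  intro x hx
  have hx0 : 0 < x := lt_of_lt_of_le ha hx.1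
  exact div_le_div_of_nonneg_right ((hc x hx)) hx0.le |>.trans_eq rfl

lemma int_ge {f : ℝ → ℝ} (hf : Continuous f) {a b c : ℝ} (ha : 0 < a) (hab : a ≤ b)
    (hc : ∀ x ∈ Set.Icc a b, c ≤ f x) :
    c * Real.log (b / a) ≤ ∫ r in a..b, f r / r := by
  rw [← const_int ha hab]
  apply intervalIntegral.integral_mono_on hab (intOn continuous_const ha hab)
    (intOn hf ha hab)
  intro x hx
  have hx0 : 0 < x := lt_of_lt_of_le ha hx.1
  exact div_le_div_of_nonneg_right ((hc x hx)) hx0.le |>.trans_eq rfl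

lemma ksm_anti {φ x y : ℝ} (hφ1 : φ ≤ 1) (hxy : x ≤ y) : ksm φ y ≤ ksm φ x := by
  unfold ksm
  have h : Real.exp (-y) ≤ Real.exp (-x) := Real.exp_le_exp.2 (neg_le_neg hxy)
  nlinarith [Real.exp_pos (-y)]

lemma ksm_ge {φ r : ℝ} (hφ1 : φ ≤ 1) : φ ≤ ksm φ r := by
  unfold ksm
  nlinarith [Real.exp_pos (-r)]

lemma kms_mono {ψ μ ω x y : ℝ} (hμψ : μ ≤ ψ) (hω : 0 ≤ ω) (hxy : x ≤ y) :
    kms ψ μ ω x ≤ kms ψ μ ω y := by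
  unfold kms
  have h : Real.exp (-ω * y) ≤ Real.exp (-ω * x) := by
    apply Real.exp_le_exp.2
    nlinarith
  nlinarith [Real.exp_pos (-ω * y)]

lemma kms_ge {ψ μ ω r : ℝ} (hμψ : μ ≤ ψ) (hω : 0 ≤ ω) (hr : 0 ≤ r) :
    μ ≤ kms ψ μ ω r := by
  unfold kms
  have h : Real.exp (-ω * r) ≤ 1 := by
    rw [← Real.exp_zero]
    apply Real.exp_le_exp.2
    nlinarith
  nlinarith [Real.exp_pos (-ω * r)]

/-- Strict monotonicity of the total mass in the remaining resource level:
N(a) = (I₁(a,R⁺)/I₂(a,R⁺))·ln(R⁺/a) is strictly decreasing on (0, R⁺). -/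
theorem mass_strictAnti (φ ψ μ ω Rplus : ℝ)
    (hφ0 : 0 < φ) (hφ1 : φ ≤ 1) (hμ0 : 0 < μ) (hμψ : μ ≤ ψ) (hω : 0 < ω)
    (hne : φ < 1 ∨ μ < ψ) (hRp : 0 < Rplus) :
    ∀ a₁ a₂ : ℝ, 0 < a₁ → a₁ < a₂ → a₂ < Rplus →
      (I1 φ a₂ Rplus / I2 ψ μ ω a₂ Rplus) * Real.log (Rplus / a₂) <
      (I1 φ a₁ Rplus / I2 ψ μ ω a₁ Rplus) * Real.log (Rplus / a₁) := by
  intro a₁ a₂ ha₁ h12 h2R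
  have ha₂ : 0 < a₂ := ha₁.trans h12
  have h12' : a₁ ≤ a₂ := le_of_lt h12
  have h2R' : a₂ ≤ Rplus := le_of_lt h2R
  set k := ksm φ a₂ with hk
  set j := kms ψ μ ω a₂ with hj
  set P := I1 φ a₁ a₂ with hP'
  set Q := I1 φ a₂ Rplus with hQ'
  set S := I2 ψ μ ω a₁ a₂ with hS'
  set T := I2 ψ μ ω a₂ Rplus with hT'
  set ℓ := Real.log (a₂ / a₁) with hℓ'
  set m := Real.log (Rplus / a₂) with hm'
  have hℓ0 : 0 < ℓ := Real.log_pos ((one_lt_div ha₁).2 h12)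
  have hm0 : 0 < m := Real.log_pos ((one_lt_div ha₂).2 h2R)
  have hk0 : 0 < k := lt_of_lt_of_le hφ0 (ksm_ge hφ1)
  have hj0 : 0 < j := lt_of_lt_of_le hμ0 (kms_ge hμψ hω.le ha₂.le)
  -- splitting
  have hsplit1 : I1 φ a₁ Rplus = P + Q := by
    rw [hP', hQ']
    unfold I1
    exact (intervalIntegral.integral_add_adjacent_intervals
      (intOn (ksm_cont φ) ha₁ h12') (intOn (ksm_cont φ) ha₂ h2R')).symm
  have hsplit2 : I2 ψ μ ω a₁ Rplus = S + T := by
    rw [hS', hT']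
    unfold I2
    exact (intervalIntegral.integral_add_adjacent_intervals
      (intOn (kms_cont ψ μ ω) ha₁ h12') (intOn (kms_cont ψ μ ω) ha₂ h2R')).symm
  have hlogsplit : Real.log (Rplus / a₁) = ℓ + m := by
    rw [hℓ', hm', Real.log_div (ne_of_gt hRp) (ne_of_gt ha₁),
      Real.log_div (ne_of_gt ha₂) (ne_of_gt ha₁),
      Real.log_div (ne_of_gt hRp) (ne_of_gt ha₂)]
    ring
  -- bounds
  have hPge : k * ℓ ≤ P := int_ge (ksm_cont φ) ha₁ h12'
    (fun x hx => ksm_anti hφ1 hx.2)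
  have hQle : Q ≤ k * m := int_le (ksm_cont φ) ha₂ h2R'
    (fun x hx => ksm_anti hφ1 hx.1)
  have hQge : φ * m ≤ Q := int_ge (ksm_cont φ) ha₂ h2R'
    (fun x _ => ksm_ge hφ1)
  have hSle : S ≤ j * ℓ := int_le (kms_cont ψ μ ω) ha₁ h12'
    (fun x hx => kms_mono hμψ hω.le hx.2)
  have hTge : j * m ≤ T := int_ge (kms_cont ψ μ ω) ha₂ h2R'
    (fun x hx => kms_mono hμψ hω.le hx.1)
  have hSge : μ * ℓ ≤ S := int_ge (kms_cont ψ μ ω) ha₁ h12'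
    (fun x hx => kms_ge hμψ hω.le (le_of_lt (lt_of_lt_of_le ha₁ hx.1)))
  have hP0 : 0 < P := lt_of_lt_of_le (mul_pos hk0 hℓ0) hPge
  have hQ0 : 0 < Q := lt_of_lt_of_le (mul_pos hφ0 hm0) hQge
  have hS0 : 0 < S := lt_of_lt_of_le (mul_pos hμ0 hℓ0) hSge
  have hT0 : 0 < T := lt_of_lt_of_le (mul_pos hj0 hm0) hTge
  -- key inequality Q*S ≤ P*T
  have key : Q * S ≤ P * T := by
    have h1 : Q * S ≤ (k * m) * (j * ℓ) :=
      mul_le_mul hQle hSle hS0.le (by positivity)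
    have h2 : (k * ℓ) * (j * m) ≤ P * T :=
      mul_le_mul hPge hTge (by positivity) hP0.le
    nlinarith [h1, h2]
  have hdiv : Q / T ≤ (P + Q) / (S + T) := by
    rw [div_le_div_iff₀ hT0 (by positivity)]
    nlinarith [key]
  rw [hsplit1, hsplit2, hlogsplit]
  calc Q / T * m < Q / T * (ℓ + m) := by
        apply mul_lt_mul_of_pos_left (by linarith) (by positivity)
      _ ≤ (P + Q) / (S + T) * (ℓ + m) :=
        mul_le_mul_of_nonneg_right hdiv (by positivity)
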